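/- Let d ≥ 1, let A_1,…,A_s and B_1,…,B_s be real d×d matrices, h > 0, and p_{n+1} ∈ ℝ^d. Suppose ζ^(1),…,ζ^(s) ∈ ℝ^d satisfy the discrete adjoint system of (SRK1): ζ^(i) = h (ω̃_i A_i + ω_i B_i) p_{n+1} + h Σ_{j=1}^{s} ã_{ji} A_i ζ^(j) + h Σ_{j=1}^{s} a_{ji} B_i ζ^(j) for i = 1,…,s. Define P̃^(i) := p_{n+1} + Σ_{j=1}^{s} (ã_{ji}/ω̃_i) ζ^(j), P^(i) := p_{n+1} + Σ_{j=1}^{s} (a_{ji}/ω_i) ζ^(j), and set ξ̃^(i) := h ω̃_i P̃^(i) and ξ^(i) := h ω_i P^(i). Then (ξ̃^(i), ξ^(i)) satisfy the discrete adjoint system of (SRK2): ξ̃^(i) = h ω̃_i p_{n+1} + h Σ_{j=1}^{s} ã_{ji} (A_j ξ̃^(j) + B_j ξ^(j)) and ξ^(i) = h ω_i p_{n+1} + h Σ_{j=1}^{s} a_{ji} (A_j ξ̃^(j) + B_j ξ^(j)) for all i, and moreover Σ_{i=1}^{s} (A_i ξ̃^(i) + B_i ξ^(i)) = Σ_{i=1}^{s}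 ζ^(i); in particular the two discrete optimality systems produce the same value p_n = p_{n+1} + Σ_{i=1}^{s} ζ^(i) = p_{n+1} + Σ_{i=1}^{s} (A_i ξ̃^(i) + B_i ξ^(i)), i.e. the discrete optimality systems associated with (SRK1) and with (SRK2) coincide. -/

import Mathlib

open Finset Matrix

/-- The discrete optimality systems associated with (SRK1) and (SRK2)
coincide: the transformed stage multipliers `ξ̃^(i) = h ω̃_i P̃^(i)`,
`ξ^(i) = h ω_i P^(i)` built from a solution `ζ` of the discrete adjoint
system of (SRK1) solve the discrete adjoint system of (SRK2), and both
produce the same adjoint update `p_n`. -/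
theorem adjoint_srk1_srk2_coincide (s d : ℕ) (hs : 1 ≤ s) (hd : 1 ≤ d)
    (ta a : Fin s → Fin s → ℝ) (tw w : Fin s → ℝ)
    (hta : ∀ i j : Fin s, i ≤ j → ta i j = 0)
    (ha : ∀ i j : Fin s, i < j → a i j = 0)
    (htw : ∀ i, tw i ≠ 0) (hw : ∀ i, w i ≠ 0)
    (A B : Fin s → Matrix (Fin d) (Fin d) ℝ)
    (h : ℝ) (hh : 0 < h) (pn1 : Fin d → ℝ)
    (ζ : Fin s → Fin d → ℝ)
    (hζ : ∀ i, ζ i = h • (tw i • (A i *ᵥ pn1) + w i • (B i *ᵥ pn1))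
        + h • ∑ j, ta j i • (A i *ᵥ ζ j) + h • ∑ j, a j i • (B i *ᵥ ζ j))
    (tP P : Fin s → Fin d → ℝ)
    (htP : ∀ i, tP i = pn1 + ∑ j, (ta j i / tw i) • ζ j)
    (hP : ∀ i, P i = pn1 + ∑ j, (a j i / w i) • ζ j)
    (tξ ξ : Fin s → Fin d → ℝ)
    (htξ : ∀ i, tξ i = (h * tw i) • tP i)
    (hξ : ∀ i, ξ i = (h * w i) • P i) :
    (∀ i, tξ i = (h * tw i) • pn1
        + h • ∑ j, ta j i • (A j *ᵥ tξ j + B j *ᵥ ξ j)) ∧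
    (∀ i, ξ i = (h * w i) • pn1
        + h • ∑ j, a j i • (A j *ᵥ tξ j + B j *ᵥ ξ j)) ∧
    (∑ i, (A i *ᵥ tξ i + B i *ᵥ ξ i)) = ∑ i, ζ i ∧
    pn1 + ∑ i, ζ i = pn1 + ∑ i, (A i *ᵥ tξ i + B i *ᵥ ξ i) := by
  have msum : ∀ (M : Matrix (Fin d) (Fin d) ℝ) (v : Fin s → Fin d → ℝ),
      M *ᵥ (∑ j, v j) = ∑ j, M *ᵥ v j := by
    intro M v
    ext x
    simp only [Matrix.mulVec, dotProduct, Finset.sum_apply, Finset.mul_sum]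
    rw [Finset.sum_comm]
  have key : ∀ j, A j *ᵥ tξ j + B j *ᵥ ξ j = ζ j := by
    intro j
    rw [htξ, hξ, htP, hP, hζ j]
    funext x
    simp only [mulVec_smul, Matrix.mulVec_add, msum, mulVec_smul, Pi.add_apply,
      Pi.smul_apply, smul_eq_mul, Finset.sum_apply, Finset.mul_sum, mul_add]
    have e1 : ∀ k : Fin s, h * tw j * (ta k j / tw j * (A j *ᵥ ζ k) x)
        = h * (ta k j * (A j *ᵥ ζ k) x) := by
      intro k; field_simp [htw j]
    have e2 : ∀ k : Fin s, h * w j * (a k j / w j * (B j *ᵥ ζ k) x)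
        = h * (a k j * (B j *ᵥ ζ k) x) := by
      intro k; field_simp [hw j]
    rw [Finset.sum_congr rfl (fun k _ => e1 k), Finset.sum_congr rfl (fun k _ => e2 k)]
    ring
  have keysum : (∑ i, (A i *ᵥ tξ i + B i *ᵥ ξ i)) = ∑ i, ζ i :=
    Finset.sum_congr rfl fun i _ => key i
  refine ⟨?_, ?_, keysum, by rw [keysum]⟩
  · intro i
    simp only [key]
    rw [htξ, htP]
    funext x
    simp only [Pi.add_apply, Pi.smul_apply, Finset.sum_apply, smul_eq_mul, mul_add,
      Finset.mul_sum]
    congr 1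
    refine Finset.sum_congr rfl fun k _ => ?_
    field_simp [htw i]
  · intro i
    simp only [key]
    rw [hξ, hP]
    funext x
    simp only [Pi.add_apply, Pi.smul_apply, Finset.sum_apply, smul_eq_mul, mul_add,
      Finset.mul_sum]
    congr 1
    refine Finset.sum_congr rfl fun k _ => ?_
    field_simp [hw i]
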